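/- Let X be a reflexive Banach space such that the pair (X, 𝕂) has the property L_{o,o} for linear functionals. Then for every Banach space Y, the pair (X, Y) has the property L_{o,o} for compact operators: for every norm-one compact operator T : X → Y and every ε > 0 there exists η > 0 such that any x ∈ S_X with ‖T(x)‖ > 1 - η lies within distance ε of some x₀ ∈ S_X with ‖T(x₀)‖ = 1. -/

import Mathlib

/-- If `X` is a reflexive Banach space such that `(X, 𝕜)` has the
`L_{o,o}` for linear functionals, then for every Banach space `Y` the pair `(X, Y)`
has the `L_{o,o}` for compact operators. -/
theorem stmt3 {𝕜 : Type*} [RCLike 𝕜] {X : Type*}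
    [NormedAddCommGroup X] [NormedSpace 𝕜 X] [CompleteSpace X]
    (hrefl : Function.Surjective (NormedSpace.inclusionInDoubleDual 𝕜 X))
    (hL : ∀ ε > (0 : ℝ), ∀ f : X →L[𝕜] 𝕜, ‖f‖ = 1 →
      ∃ η > (0 : ℝ), ∀ x : X, ‖x‖ = 1 → 1 - η < ‖f x‖ →
        ∃ x₀ : X, ‖x₀‖ = 1 ∧ ‖f x₀‖ = 1 ∧ ‖x₀ - x‖ < ε)
    (Y : Type*) [NormedAddCommGroup Y] [NormedSpace 𝕜 Y] [CompleteSpace Y] :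
    ∀ T : X →L[𝕜] Y, IsCompactOperator T → ‖T‖ = 1 → ∀ ε > (0 : ℝ),
      ∃ η > (0 : ℝ), ∀ x : X, ‖x‖ = 1 → 1 - η < ‖T x‖ →
        ∃ x₀ : X, ‖x₀‖ = 1 ∧ ‖T x₀‖ = 1 ∧ ‖x₀ - x‖ < ε := by
  intro T hT hTnorm ε hε
  by_contra hcon
  push_neg at hcon
  -- Build a sequence `x n` with `‖x n‖ = 1`, `‖T (x n)‖ > 1 - 1/(n+1)`, and no
  -- norm-attaining point within `ε`.
  have hseq : ∀ n : ℕ, ∃ x : X, ‖x‖ = 1 ∧ 1 - 1 / (n + 1 : ℝ) < ‖T x‖ ∧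
      ∀ x₀ : X, ‖x₀‖ = 1 → ‖T x₀‖ = 1 → ε ≤ ‖x₀ - x‖ := by
    intro n
    have hpos : (0 : ℝ) < 1 / (n + 1 : ℝ) := by positivity
    obtain ⟨x, hx1, hx2, hx3⟩ := hcon (1 / (n + 1 : ℝ)) hpos
    exact ⟨x, hx1, hx2, fun x₀ h1 h2 => hx3 x₀ h1 h2⟩
  choose x hx1 hx2 hx3 using hseq
  -- `T x n ∈ K` for a compact `K`.
  obtain ⟨K, hK, hKsub⟩ := hT.image_closedBall_subset_compact (𝕜₁ := 𝕜) 1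
  have hmem : ∀ n, T (x n) ∈ K := fun n =>
    hKsub ⟨x n, by simp [Metric.mem_closedBall, (hx1 n).le], rfl⟩
  obtain ⟨y, hyK, φ, hφ, hφlim⟩ := hK.tendsto_subseq hmem
  -- `‖T (x n)‖ → 1`.
  have hTle : ∀ n, ‖T (x n)‖ ≤ 1 := fun n => by
    calc ‖T (x n)‖ ≤ ‖T‖ * ‖x n‖ := T.le_opNorm _
    _ = 1 := by rw [hTnorm, hx1 n, mul_one]
  have hlim1 : Filter.Tendsto (fun n => ‖T (x n)‖) Filter.atTop (nhds 1) := by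
    have h1 : Filter.Tendsto (fun n : ℕ => 1 - 1 / (n + 1 : ℝ)) Filter.atTop (nhds 1) := by
      have := tendsto_one_div_add_atTop_nhds_zero_nat (𝕜 := ℝ)
      have h := Filter.Tendsto.const_sub (1 : ℝ) this
      simpa using h
    exact tendsto_of_tendsto_of_tendsto_of_le_of_le h1 tendsto_const_nhds
      (fun n => (hx2 n).le) hTle
  have hylim : Filter.Tendsto (fun n => ‖T (x (φ n))‖) Filter.atTop (nhds ‖y‖) :=
    (continuous_norm.continuousAt.tendsto.comp hφlim)
  have hy1 : ‖y‖ = 1 :=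
    tendsto_nhds_unique hylim (hlim1.comp hφ.tendsto_atTop)
  have hy0 : y ≠ 0 := by intro h; rw [h, norm_zero] at hy1; exact one_ne_zero hy1.symm
  -- Norming functional for `y`.
  obtain ⟨f, hf1, hfy⟩ := exists_dual_vector 𝕜 y (norm_ne_zero_iff.mpr hy0)
  set g : X →L[𝕜] 𝕜 := f.comp T with hg
  have hgle : ‖g‖ ≤ 1 := by
    calc ‖g‖ ≤ ‖f‖ * ‖T‖ := ContinuousLinearMap.opNorm_comp_le _ _
    _ = 1 := by rw [hf1, hTnorm, mul_one]
  -- `‖g (x (φ n))‖ → 1`.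
  have hglim : Filter.Tendsto (fun n => ‖g (x (φ n))‖) Filter.atTop (nhds 1) := by
    have hcont : Filter.Tendsto (fun n => f (T (x (φ n)))) Filter.atTop (nhds (f y)) :=
      (f.continuous.continuousAt.tendsto.comp hφlim)
    have : Filter.Tendsto (fun n => ‖f (T (x (φ n)))‖) Filter.atTop (nhds ‖f y‖) :=
      continuous_norm.continuousAt.tendsto.comp hcont
    have hfy1 : ‖f y‖ = 1 := by rw [hfy]; simp [hy1]
    rw [hfy1] at this
    exact this
  have hgge : (1 : ℝ) ≤ ‖g‖ := by
    refine le_of_tendsto hglim (Filter.Eventually.of_forall fun n => ?_)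
    calc ‖g (x (φ n))‖ ≤ ‖g‖ * ‖x (φ n)‖ := g.le_opNorm _
    _ = ‖g‖ := by rw [hx1, mul_one]
  have hg1 : ‖g‖ = 1 := le_antisymm hgle hgge
  obtain ⟨η, hη, hprop⟩ := hL ε hε g hg1
  -- choose n with `‖g (x (φ n))‖ > 1 - η`
  have : ∀ᶠ n in Filter.atTop, 1 - η < ‖g (x (φ n))‖ :=
    hglim.eventually_const_lt (by linarith)
  obtain ⟨n, hn⟩ := this.exists
  obtain ⟨x₀, hx₀1, hx₀2, hx₀3⟩ := hprop (x (φ n)) (hx1 _) hn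
  have hTx₀le : ‖T x₀‖ ≤ 1 := by
    calc ‖T x₀‖ ≤ ‖T‖ * ‖x₀‖ := T.le_opNorm _
    _ = 1 := by rw [hTnorm, hx₀1, mul_one]
  have hTx₀ : ‖T x₀‖ = 1 := by
    refine le_antisymm hTx₀le ?_
    calc (1 : ℝ) = ‖g x₀‖ := hx₀2.symm
    _ = ‖f (T x₀)‖ := rfl
    _ ≤ ‖f‖ * ‖T x₀‖ := f.le_opNorm _
    _ = ‖T x₀‖ := by rw [hf1, one_mul]
  exact absurd hx₀3 (not_lt.mpr (hx3 (φ n) x₀ hx₀1 hTx₀))
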